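/- Let Q₁,…,Q₂₈ ∈ ℂ[x₁,…,x₁₄] be the 28 quadrics listed in the context. If a point (x₁,…,x₁₄) ∈ ℂ¹⁴ satisfies x_i = 0 for all i ∉ {3, 10} and Q_j(x) = 0 for all j = 1,…,28, then x₃ = 0 and x₁₀ = 0. (Thus the equations have only the trivial solution on the 1/3 singular stratum, so the Calabi–Yau threefold quasi-linear section X of wΣ ⊂ ℙ¹³[1²,2,3²,4⁴,5²,6,7²] contains no 1/3 singularities, x₃ and x₁₀ being the coordinates of weight 3.) -/
import Mathlib


/-- The quadric `Q1`, evaluated at a point of `ℂ¹⁴`. -/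
noncomputable def cG2Q1 (x : Fin 14 → ℂ) : ℂ :=
  (1 : ℂ) * x 13 * x 13 + (1 : ℂ) * x 12 * x 13 + (1/3 : ℂ) * x 12 * x 12 + (1 : ℂ) * x 5 * x 11 + (1/3 : ℂ) * x 3 * x 9 + (1 : ℂ) * x 4 * x 10 + (1/3 : ℂ) * x 2 * x 8 + (1 : ℂ) * x 1 * x 7 + (1/3 : ℂ) * x 0 * x 6

/-- The quadric `Q2`, evaluated at a point of `ℂ¹⁴`. -/
noncomputable def cG2Q2 (x : Fin 14 → ℂ) : ℂ :=
  (1 : ℂ) * x 13 * x 13 + (2 : ℂ) * x 12 * x 13 + (8/9 : ℂ) * x 12 * x 12 + (1 : ℂ) * x 5 * x 11 + (3 : ℂ) * x 4 * x 10 + (-4/9 : ℂ) * x 3 * x 9 + (-7/9 : ℂ) * x 2 * x 8 + (-5/9 : ℂ) * x 0 * x 6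

/-- The quadric `Q3`, evaluated at a point of `ℂ¹⁴`. -/
noncomputable def cG2Q3 (x : Fin 14 → ℂ) : ℂ :=
  (2 : ℂ) * x 12 * x 13 + (5/3 : ℂ) * x 12 * x 12 + (9 : ℂ) * x 4 * x 10 + (-5/3 : ℂ) * x 3 * x 9 + (-7/3 : ℂ) * x 2 * x 8 + (3 : ℂ) * x 1 * x 7 + (-4/3 : ℂ) * x 0 * x 6

/-- The quadric `Q4`, evaluated at a point of `ℂ¹⁴`. -/
noncomputable def cG2Q4 (x : Fin 14 → ℂ) : ℂ :=
  (1 : ℂ) * x 12 * x 12 + (9 : ℂ) * x 4 * x 10 + (-3 : ℂ) * x 3 * x 9 + (-3 : ℂ) * x 2 * x 8 + (9 : ℂ) * x 1 * x 7 + (-2 : ℂ) * x 0 * x 6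

/-- The quadric `Q5`, evaluated at a point of `ℂ¹⁴`. -/
noncomputable def cG2Q5 (x : Fin 14 → ℂ) : ℂ :=
  (1 : ℂ) * x 10 * x 13 + (1/3 : ℂ) * x 10 * x 12 + (1/9 : ℂ) * x 6 * x 9 + (1 : ℂ) * x 1 * x 11

/-- The quadric `Q6`, evaluated at a point of `ℂ¹⁴`. -/
noncomputable def cG2Q6 (x : Fin 14 → ℂ) : ℂ :=
  (1 : ℂ) * x 4 * x 9 + (-2/3 : ℂ) * x 3 * x 8 + (-3 : ℂ) * x 2 * x 7 + (2 : ℂ) * x 0 * x 13 + (1/3 : ℂ) * x 0 * x 12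

/-- The quadric `Q7`, evaluated at a point of `ℂ¹⁴`. -/
noncomputable def cG2Q7 (x : Fin 14 → ℂ) : ℂ :=
  (1 : ℂ) * x 9 * x 13 + (4/9 : ℂ) * x 9 * x 12 + (2/9 : ℂ) * x 6 * x 8 + (-1 : ℂ) * x 2 * x 11 + (1/3 : ℂ) * x 0 * x 10

/-- The quadric `Q8`, evaluated at a point of `ℂ¹⁴`. -/
noncomputable def cG2Q8 (x : Fin 14 → ℂ) : ℂ :=
  (1 : ℂ) * x 8 * x 13 + (1 : ℂ) * x 8 * x 12 + (-1 : ℂ) * x 6 * x 7 + (1 : ℂ) * x 3 * x 11 + (2/3 : ℂ) * x 0 * x 9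

/-- The quadric `Q9`, evaluated at a point of `ℂ¹⁴`. -/
noncomputable def cG2Q9 (x : Fin 14 → ℂ) : ℂ :=
  (1 : ℂ) * x 7 * x 13 + (2/3 : ℂ) * x 7 * x 12 + (-1 : ℂ) * x 4 * x 11 + (1/9 : ℂ) * x 0 * x 8

/-- The quadric `Q10`, evaluated at a point of `ℂ¹⁴`. -/
noncomputable def cG2Q10 (x : Fin 14 → ℂ) : ℂ :=
  (2 : ℂ) * x 6 * x 13 + (5/3 : ℂ) * x 6 * x 12 + (-3 : ℂ) * x 3 * x 10 + (-2/3 : ℂ) * x 2 * x 9 + (1 : ℂ) * x 1 * x 8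

/-- The quadric `Q11`, evaluated at a point of `ℂ¹⁴`. -/
noncomputable def cG2Q11 (x : Fin 14 → ℂ) : ℂ :=
  (1 : ℂ) * x 5 * x 7 + (1 : ℂ) * x 4 * x 13 + (1/3 : ℂ) * x 4 * x 12 + (1/9 : ℂ) * x 0 * x 3

/-- The quadric `Q12`, evaluated at a point of `ℂ¹⁴`. -/
noncomputable def cG2Q12 (x : Fin 14 → ℂ) : ℂ :=
  (3 : ℂ) * x 4 * x 6 + (-1 : ℂ) * x 5 * x 8 + (1 : ℂ) * x 3 * x 13 + (4/3 : ℂ) * x 3 * x 12 + (-2/3 : ℂ) * x 0 * x 2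

/-- The quadric `Q13`, evaluated at a point of `ℂ¹⁴`. -/
noncomputable def cG2Q13 (x : Fin 14 → ℂ) : ℂ :=
  (1 : ℂ) * x 5 * x 9 + (-2/3 : ℂ) * x 3 * x 6 + (1 : ℂ) * x 2 * x 13 + (-1/3 : ℂ) * x 2 * x 12 + (3 : ℂ) * x 0 * x 1

/-- The quadric `Q14`, evaluated at a point of `ℂ¹⁴`. -/
noncomputable def cG2Q14 (x : Fin 14 → ℂ) : ℂ :=
  (-1 : ℂ) * x 5 * x 10 + (1/9 : ℂ) * x 2 * x 6 + (1 : ℂ) * x 1 * x 13 + (2/3 : ℂ) * x 1 * x 12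

/-- The quadric `Q15`, evaluated at a point of `ℂ¹⁴`. -/
noncomputable def cG2Q15 (x : Fin 14 → ℂ) : ℂ :=
  (1 : ℂ) * x 11 * x 12 + (-1/3 : ℂ) * x 8 * x 9 + (3 : ℂ) * x 7 * x 10

/-- The quadric `Q16`, evaluated at a point of `ℂ¹⁴`. -/
noncomputable def cG2Q16 (x : Fin 14 → ℂ) : ℂ :=
  (1 : ℂ) * x 9 * x 12 + (-1 : ℂ) * x 6 * x 8 + (3 : ℂ) * x 0 * x 10

/-- The quadric `Q17`, evaluated at a point of `ℂ¹⁴`. -/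
noncomputable def cG2Q17 (x : Fin 14 → ℂ) : ℂ :=
  (1 : ℂ) * x 8 * x 12 + (-3 : ℂ) * x 6 * x 7 + (1 : ℂ) * x 0 * x 9

/-- The quadric `Q18`, evaluated at a point of `ℂ¹⁴`. -/
noncomputable def cG2Q18 (x : Fin 14 → ℂ) : ℂ :=
  (1 : ℂ) * x 6 * x 12 + (-3 : ℂ) * x 3 * x 10 + (3 : ℂ) * x 1 * x 8

/-- The quadric `Q19`, evaluated at a point of `ℂ¹⁴`. -/
noncomputable def cG2Q19 (x : Fin 14 → ℂ) : ℂ :=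
  (1 : ℂ) * x 5 * x 12 + (-1/3 : ℂ) * x 2 * x 3 + (3 : ℂ) * x 1 * x 4

/-- The quadric `Q20`, evaluated at a point of `ℂ¹⁴`. -/
noncomputable def cG2Q20 (x : Fin 14 → ℂ) : ℂ :=
  (3 : ℂ) * x 4 * x 6 + (1 : ℂ) * x 3 * x 12 + (-1 : ℂ) * x 0 * x 2

/-- The quadric `Q21`, evaluated at a point of `ℂ¹⁴`. -/
noncomputable def cG2Q21 (x : Fin 14 → ℂ) : ℂ :=
  (1 : ℂ) * x 3 * x 6 + (1 : ℂ) * x 2 * x 12 + (-3 : ℂ) * x 0 * x 1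

/-- The quadric `Q22`, evaluated at a point of `ℂ¹⁴`. -/
noncomputable def cG2Q22 (x : Fin 14 → ℂ) : ℂ :=
  (1 : ℂ) * x 0 * x 12 + (-3 : ℂ) * x 4 * x 9 + (3 : ℂ) * x 2 * x 7

/-- The quadric `Q23`, evaluated at a point of `ℂ¹⁴`. -/
noncomputable def cG2Q23 (x : Fin 14 → ℂ) : ℂ :=
  (1 : ℂ) * x 8 * x 10 + (-1/3 : ℂ) * x 9 * x 9 + (1 : ℂ) * x 6 * x 11

/-- The quadric `Q24`, evaluated at a point of `ℂ¹⁴`. -/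
noncomputable def cG2Q24 (x : Fin 14 → ℂ) : ℂ :=
  (1/3 : ℂ) * x 8 * x 8 + (-1 : ℂ) * x 7 * x 9 + (1 : ℂ) * x 0 * x 11

/-- The quadric `Q25`, evaluated at a point of `ℂ¹⁴`. -/
noncomputable def cG2Q25 (x : Fin 14 → ℂ) : ℂ :=
  (1/3 : ℂ) * x 6 * x 6 + (1 : ℂ) * x 2 * x 10 + (1 : ℂ) * x 1 * x 9

/-- The quadric `Q26`, evaluated at a point of `ℂ¹⁴`. -/
noncomputable def cG2Q26 (x : Fin 14 → ℂ) : ℂ :=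
  (1 : ℂ) * x 4 * x 8 + (1 : ℂ) * x 3 * x 7 + (1/3 : ℂ) * x 0 * x 0

/-- The quadric `Q27`, evaluated at a point of `ℂ¹⁴`. -/
noncomputable def cG2Q27 (x : Fin 14 → ℂ) : ℂ :=
  (1 : ℂ) * x 5 * x 6 + (1/3 : ℂ) * x 2 * x 2 + (-1 : ℂ) * x 1 * x 3

/-- The quadric `Q28`, evaluated at a point of `ℂ¹⁴`. -/
noncomputable def cG2Q28 (x : Fin 14 → ℂ) : ℂ :=
  (1 : ℂ) * x 0 * x 5 + (-1/3 : ℂ) * x 3 * x 3 + (1 : ℂ) * x 2 * x 4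

/-- The 28 quadrics `Q₁, …, Q₂₈` defining the codimension-eight `G₂` flag variety
`Σ ⊂ ℙ¹³`, as functions on `ℂ¹⁴` (a point is `x : Fin 14 → ℂ`, with
`xᵢ = x (i−1)`). -/
noncomputable def cG2Quadrics : Fin 28 → (Fin 14 → ℂ) → ℂ :=
  ![cG2Q1, cG2Q2, cG2Q3, cG2Q4, cG2Q5, cG2Q6, cG2Q7, cG2Q8, cG2Q9, cG2Q10, cG2Q11, cG2Q12, cG2Q13, cG2Q14, cG2Q15, cG2Q16, cG2Q17, cG2Q18, cG2Q19, cG2Q20, cG2Q21, cG2Q22, cG2Q23, cG2Q24, cG2Q25, cG2Q26, cG2Q27, cG2Q28]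

/-- **No `1/3` singularities.**  If a point of `ℂ¹⁴` has `xᵢ = 0` for all
`i ∉ {3, 10}` and satisfies all 28 quadrics, then also `x₃ = 0` and `x₁₀ = 0`.
(Thus the equations have only the trivial solution on the `1/3` singular stratum,
so the Calabi–Yau threefold section `X ⊂ wΣ ⊂ ℙ¹³[1²,2,3²,4⁴,5²,6,7²]` contains no
`1/3` singularities, `x₃` and `x₁₀` being the coordinates of weight 3.) -/
theorem G2_no_one_third_singularities (x : Fin 14 → ℂ)
    (hzero : ∀ i : Fin 14, i ≠ 2 → i ≠ 9 → x i = 0)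
    (hquad : ∀ j : Fin 28, cG2Quadrics j x = 0) :
    x 2 = 0 ∧ x 9 = 0 := by
  have h27 : cG2Q27 x = 0 := hquad 26
  have h23 : cG2Q23 x = 0 := hquad 22
  have h1 : x 1 = 0 := hzero 1 (by decide) (by decide)
  have h5 : x 5 = 0 := hzero 5 (by decide) (by decide)
  have h6 : x 6 = 0 := hzero 6 (by decide) (by decide)
  have h8 : x 8 = 0 := hzero 8 (by decide) (by decide)
  have h11 : x 11 = 0 := hzero 11 (by decide) (by decide)
  unfold cG2Q27 at h27
  unfold cG2Q23 at h23
  rw [h1, h5, h6] at h27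
  rw [h6, h8, h11] at h23
  constructor
  · have h : x 2 * x 2 = 0 := by linear_combination 3 * h27
    exact (mul_self_eq_zero).mp h
  · have h : x 9 * x 9 = 0 := by linear_combination -3 * h23
    exact (mul_self_eq_zero).mp h
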